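/- Suppose F2 is atomless conditionally to F1. Then for every C ∈ F2 and every F1-measurable function h : Ω → [0,1] there exists a set B ∈ F2 with B ⊆ C such that E[1_B | F1] = h · E[1_C | F1] almost surely. -/

import Mathlib

open MeasureTheory ProbabilityTheory Set
open scoped ENNReal

/-- The conditional expectation (under `P`, defined on `F2`) of the indicator of `A`
given the sub-σ-algebra `F1`. -/
noncomputable def cexpInd {Ω : Type*} (F1 F2 : MeasurableSpace Ω) (P : @Measure Ω F2)
    (A : Set Ω) : Ω → ℝ :=
  P[A.indicator (fun _ => (1 : ℝ)) | F1]

/-- `F2` is atomless conditionally to `F1`: for every `A ∈ F2` there is `B ∈ F2`, `B ⊆ A`,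
with `0 < E[1_B | F1] < E[1_A | F1]` almost surely on the set `{E[1_A | F1] > 0}`. -/
def CondAtomless {Ω : Type*} (F1 F2 : MeasurableSpace Ω) (P : @Measure Ω F2) : Prop :=
  ∀ A : Set Ω, MeasurableSet[F2] A → ∃ B : Set Ω, MeasurableSet[F2] B ∧ B ⊆ A ∧
    ∀ᵐ ω ∂P, 0 < cexpInd F1 F2 P A ω →
      0 < cexpInd F1 F2 P B ω ∧ cexpInd F1 F2 P B ω < cexpInd F1 F2 P A ω

set_option linter.unusedSectionVars false
set_option maxHeartbeats 1000000
section helpers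
variable {Ω : Type*} {F1 F2 : MeasurableSpace Ω} (P : @Measure Ω F2)
  [IsProbabilityMeasure P]

lemma intInd {A : Set Ω} (hA : MeasurableSet[F2] A) :
    Integrable (A.indicator fun _ => (1 : ℝ)) P :=
  (integrable_const (1 : ℝ)).indicator hA

lemma cexpInd_nonneg (A : Set Ω) : 0 ≤ᵐ[P] cexpInd F1 F2 P A :=
  condExp_nonneg (Filter.Eventually.of_forall fun ω => Set.indicator_nonneg (fun _ _ => zero_le_one) ω)

lemma cexpInd_sm (A : Set Ω) : StronglyMeasurable[F1] (cexpInd F1 F2 P A) :=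
  stronglyMeasurable_condExp

lemma cexpInd_meas1 (A : Set Ω) : Measurable[F1] (cexpInd F1 F2 P A) :=
  (cexpInd_sm A (P := P)).measurable

lemma cexpInd_mono {A B : Set Ω} (hA : MeasurableSet[F2] A) (hB : MeasurableSet[F2] B)
    (hsub : B ⊆ A) : cexpInd F1 F2 P B ≤ᵐ[P] cexpInd F1 F2 P A :=
  condExp_mono (intInd P hB) (intInd P hA)
    (Filter.Eventually.of_forall fun ω => Set.indicator_le_indicator_of_subset hsub (fun _ => zero_le_one) ω)

lemma cexpInd_le_one (hle : F1 ≤ F2) {A : Set Ω} (hA : MeasurableSet[F2] A) :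
    cexpInd F1 F2 P A ≤ᵐ[P] 1 := by
  have h1 : cexpInd F1 F2 P A ≤ᵐ[P] P[(fun _ => (1:ℝ)) | F1] :=
    condExp_mono (intInd P hA) (integrable_const 1)
      (Filter.Eventually.of_forall fun ω => Set.indicator_le_self' (fun _ _ => zero_le_one) ω)
  calc cexpInd F1 F2 P A ≤ᵐ[P] _ := h1
  _ =ᵐ[P] (1 : Ω → ℝ) := by rw [condExp_const hle]; rfl

lemma cexpInd_union {A B : Set Ω} (hA : MeasurableSet[F2] A) (hB : MeasurableSet[F2] B)
    (hd : Disjoint A B) :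
    cexpInd F1 F2 P (A ∪ B) =ᵐ[P] cexpInd F1 F2 P A + cexpInd F1 F2 P B := by
  have : (A ∪ B).indicator (fun _ => (1:ℝ)) =
      A.indicator (fun _ => (1:ℝ)) + B.indicator (fun _ => (1:ℝ)) := by
    ext ω
    simp only [Pi.add_apply]
    by_cases hω : ω ∈ A
    · rw [Set.indicator_of_mem (Set.mem_union_left _ hω), Set.indicator_of_mem hω,
        Set.indicator_of_notMem (fun hb => Set.disjoint_left.mp hd hω hb)]
      ring
    · by_cases hω' : ω ∈ B
      · rw [Set.indicator_of_mem (Set.mem_union_right _ hω'), Set.indicator_of_notMem hω,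
          Set.indicator_of_mem hω']
        ring
      · rw [Set.indicator_of_notMem (fun hc => hc.elim hω hω'), Set.indicator_of_notMem hω,
          Set.indicator_of_notMem hω']
        ring
  rw [cexpInd, this]
  exact condExp_add (intInd P hA) (intInd P hB) F1

lemma integral_cexpInd (hle : F1 ≤ F2) {A : Set Ω} (hA : MeasurableSet[F2] A) :
    ∫ ω, cexpInd F1 F2 P A ω ∂P = (P A).toReal := by
  rw [cexpInd, integral_condExp hle, integral_indicator_const _ hA]
  simp [Measure.real]

lemma cexpInd_inter {A D : Set Ω} (hA : MeasurableSet[F2] A) (hD : MeasurableSet[F1] D) :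
    cexpInd F1 F2 P (A ∩ D) =ᵐ[P] D.indicator (cexpInd F1 F2 P A) := by
  have : (A ∩ D).indicator (fun _ => (1:ℝ)) = D.indicator (A.indicator (fun _ => (1:ℝ))) := by
    ext ω
    by_cases hω : ω ∈ D
    · rw [Set.indicator_of_mem hω]
      by_cases h2 : ω ∈ A
      · rw [Set.indicator_of_mem (Set.mem_inter h2 hω), Set.indicator_of_mem h2]
      · rw [Set.indicator_of_notMem (fun hc => h2 hc.1), Set.indicator_of_notMem h2]
    · rw [Set.indicator_of_notMem hω, Set.indicator_of_notMem (fun hc => hω hc.2)]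
  rw [cexpInd, this]
  exact condExp_indicator (intInd P hA) hD

end helpers

section main
variable {Ω : Type*} {F1 F2 : MeasurableSpace Ω} (P : @Measure Ω F2)
  [IsProbabilityMeasure P]

lemma cexpInd_diff {A B : Set Ω} (hA : MeasurableSet[F2] A) (hB : MeasurableSet[F2] B)
    (hsub : B ⊆ A) :
    cexpInd F1 F2 P (A \ B) =ᵐ[P] fun ω => cexpInd F1 F2 P A ω - cexpInd F1 F2 P B ω := by
  have hu := cexpInd_union (F1 := F1) P hB (hA.diff hB) disjoint_sdiff_right
  rw [Set.union_diff_cancel hsub] at hu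
  filter_upwards [hu] with ω hω
  simp only [Pi.add_apply] at hω
  linarith

lemma shrink (hle : F1 ≤ F2) (hatomless : CondAtomless F1 F2 P)
    {A : Set Ω} (hA : MeasurableSet[F2] A) (n : ℕ) :
    ∃ B : Set Ω, MeasurableSet[F2] B ∧ B ⊆ A ∧ ∀ᵐ ω ∂P,
      (0 < cexpInd F1 F2 P A ω → 0 < cexpInd F1 F2 P B ω) ∧
      cexpInd F1 F2 P B ω ≤ ((1:ℝ)/2)^n * cexpInd F1 F2 P A ω := by
  induction n with
  | zero =>
    exact ⟨A, hA, subset_rfl, Filter.Eventually.of_forall fun ω => ⟨id, by simp⟩⟩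
  | succ n ih =>
    obtain ⟨Bn, hBnm, hBnsub, hIH⟩ := ih
    obtain ⟨B', hB'm, hB'sub, hatom⟩ := hatomless Bn hBnm
    set E : Set Ω := {ω | 2 * cexpInd F1 F2 P B' ω ≤ cexpInd F1 F2 P Bn ω} with hE
    have hE1 : MeasurableSet[F1] E :=
      measurableSet_le ((cexpInd_meas1 P B').const_mul 2) (cexpInd_meas1 P Bn)
    have hE2 : MeasurableSet[F2] E := hle _ hE1
    refine ⟨(B' ∩ E) ∪ ((Bn \ B') ∩ Eᶜ),
      ((hB'm.inter hE2).union ((hBnm.diff hB'm).inter hE2.compl)),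
      ?_, ?_⟩
    · intro ω hω
      rcases hω with hω | hω
      · exact hBnsub (hB'sub hω.1)
      · exact hBnsub hω.1.1
    · have hdisj : Disjoint (B' ∩ E) ((Bn \ B') ∩ Eᶜ) :=
        disjoint_compl_right.mono Set.inter_subset_right Set.inter_subset_right
      have hu := cexpInd_union (F1 := F1) P (hB'm.inter hE2) ((hBnm.diff hB'm).inter hE2.compl) hdisj
      have hi1 := cexpInd_inter (F1 := F1) P hB'm hE1
      have hi2 := cexpInd_inter (F1 := F1) P (hBnm.diff hB'm) hE1.compl
      have hdiff := cexpInd_diff (F1 := F1) P hBnm hB'm hB'sub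
      have hb'0 := cexpInd_nonneg (F1 := F1) (P := P) B'
      have hbn0 := cexpInd_nonneg (F1 := F1) (P := P) Bn
      have hA0 := cexpInd_nonneg (F1 := F1) (P := P) A
      have hble := cexpInd_mono (F1 := F1) P hBnm hB'm hB'sub
      filter_upwards [hu, hi1, hi2, hdiff, hIH, hatom, hb'0, hbn0, hA0, hble]
        with ω hu hi1 hi2 hdiff hIH hatom hb'0 hbn0 hA0 hble
      have hval : cexpInd F1 F2 P (B' ∩ E ∪ (Bn \ B') ∩ Eᶜ) ω =
          E.indicator (cexpInd F1 F2 P B') ω + Eᶜ.indicator (cexpInd F1 F2 P (Bn \ B')) ω := by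
        rw [hu]; simp only [Pi.add_apply]; rw [hi1, hi2]
      have hpow : ((1:ℝ)/2)^(n+1) = ((1:ℝ)/2)^n * (1/2) := pow_succ _ _
      by_cases hωE : ω ∈ E
      · have hmem : (2:ℝ) * cexpInd F1 F2 P B' ω ≤ cexpInd F1 F2 P Bn ω := hωE
        rw [hval, Set.indicator_of_mem hωE, Set.indicator_of_notMem (by simp [hωE])]
        constructor
        · intro hcA
          have h1 := hIH.1 hcA
          have h2 := (hatom h1).1
          linarith
        · by_cases hcA : 0 < cexpInd F1 F2 P A ω
          · have h2 := hIH.2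
            rw [hpow]; nlinarith
          · have hcA0 : cexpInd F1 F2 P A ω = 0 := le_antisymm (not_lt.mp hcA) hA0
            have h2 := hIH.2
            rw [hcA0] at h2 ⊢
            simp only [mul_zero] at h2 ⊢
            linarith
      · have hmem : cexpInd F1 F2 P Bn ω < 2 * cexpInd F1 F2 P B' ω := not_le.mp hωE
        rw [hval, Set.indicator_of_notMem hωE, Set.indicator_of_mem (by simp [hωE]), hdiff]
        constructor
        · intro hcA
          have h1 := hIH.1 hcA
          have h2 := (hatom h1).2
          linarith
        · by_cases hcA : 0 < cexpInd F1 F2 P A ω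
          · have h1 := hIH.1 hcA
            have h2 := hIH.2
            rw [hpow]; nlinarith
          · have hcA0 : cexpInd F1 F2 P A ω = 0 := le_antisymm (not_lt.mp hcA) hA0
            have h2 := hIH.2
            rw [hcA0] at h2 ⊢
            simp only [mul_zero] at h2 ⊢
            linarith

end main

section exhaust
variable {Ω : Type*} {F1 F2 : MeasurableSpace Ω} (P : @Measure Ω F2)
  [IsProbabilityMeasure P]

lemma exhaust (hle : F1 ≤ F2) (hatomless : CondAtomless F1 F2 P)
    {A : Set Ω} (hA : MeasurableSet[F2] A) {g : Ω → ℝ} (hgmeas : Measurable[F1] g)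
    (hg0 : 0 ≤ᵐ[P] g) (hg1 : g ≤ᵐ[P] cexpInd F1 F2 P A) :
    ∃ B : Set Ω, MeasurableSet[F2] B ∧ B ⊆ A ∧ cexpInd F1 F2 P B =ᵐ[P] g := by
  classical
  have hgmeas2 : Measurable[F2] g := hgmeas.mono hle le_rfl
  have hgint : Integrable g P := by
    refine Integrable.mono' (integrable_const (1:ℝ)) hgmeas2.aestronglyMeasurable ?_
    filter_upwards [hg0, hg1, cexpInd_le_one (F1 := F1) P hle hA] with ω h0 h1 hA1
    simp only [Pi.zero_apply] at h0
    simp only [Pi.one_apply] at hA1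
    rw [Real.norm_eq_abs, abs_le]
    constructor <;> linarith
  set Q : Set Ω → Set Ω → Prop := fun B B' =>
    MeasurableSet[F2] B' ∧ B' ⊆ A \ B ∧
      ∀ᵐ ω ∂P, cexpInd F1 F2 P B ω + cexpInd F1 F2 P B' ω ≤ g ω with hQdef
  set S : Set Ω → Set ℝ := fun B => {x | ∃ B', Q B B' ∧ (P B').toReal = x} with hSdef
  have hcE : cexpInd F1 F2 P (∅ : Set Ω) = 0 := by
    rw [cexpInd]
    simp only [Set.indicator_empty]
    exact condExp_zero
  have hSbdd : ∀ B : Set Ω, BddAbove (S B) := by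
    intro B
    refine ⟨1, fun x hx => ?_⟩
    obtain ⟨B', _, hB'⟩ := hx
    rw [← hB']
    calc (P B').toReal ≤ (P Set.univ).toReal :=
        ENNReal.toReal_mono (measure_ne_top P _) (measure_mono (Set.subset_univ _))
      _ = 1 := by simp
  have hstep : ∀ (m : ℕ) (B : Set Ω), MeasurableSet[F2] B → B ⊆ A →
      (∀ᵐ ω ∂P, cexpInd F1 F2 P B ω ≤ g ω) →
      ∃ B', Q B B' ∧ sSup (S B) - (1/2)^m ≤ (P B').toReal := by
    intro m B hBm hBsub hBg
    have h0 : (0:ℝ) ∈ S B := by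
      refine ⟨∅, ⟨MeasurableSet.empty, Set.empty_subset _, ?_⟩, by simp⟩
      filter_upwards [hBg] with ω hω
      rw [hcE]
      simpa using hω
    have hne : (S B).Nonempty := ⟨0, h0⟩
    have hlt : sSup (S B) - (1/2)^m < sSup (S B) := by
      have hp : (0:ℝ) < (1/2)^m := by positivity
      linarith
    obtain ⟨x, hxS, hxlt⟩ := exists_lt_of_lt_csSup hne hlt
    obtain ⟨B', hQ', hx⟩ := hxS
    exact ⟨B', hQ', by rw [hx]; linarith⟩
  let T := {B : Set Ω // MeasurableSet[F2] B ∧ B ⊆ A ∧ ∀ᵐ ω ∂P, cexpInd F1 F2 P B ω ≤ g ω}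
  have hstepT : ∀ (m : ℕ) (B : T), ∃ B', Q B.1 B' ∧
      sSup (S B.1) - (1/2)^m ≤ (P B').toReal :=
    fun m B => hstep m B.1 B.2.1 B.2.2.1 B.2.2.2
  choose pick hpickQ hpickS using hstepT
  have hunion : ∀ (m : ℕ) (B : T), MeasurableSet[F2] (B.1 ∪ pick m B) ∧
      (B.1 ∪ pick m B) ⊆ A ∧ ∀ᵐ ω ∂P, cexpInd F1 F2 P (B.1 ∪ pick m B) ω ≤ g ω := by
    intro m B
    obtain ⟨hm', hsub', hae'⟩ := hpickQ m B
    have hdisj : Disjoint B.1 (pick m B) := ((Set.subset_diff.mp hsub').2).symm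
    refine ⟨B.2.1.union hm', Set.union_subset B.2.2.1 (hsub'.trans Set.diff_subset), ?_⟩
    have hu := cexpInd_union (F1 := F1) P B.2.1 hm' hdisj
    filter_upwards [hu, hae'] with ω h1 h2
    rw [h1]
    exact h2
  let Fseq : ℕ → T := fun m => Nat.rec
    ⟨∅, ⟨MeasurableSet.empty, Set.empty_subset A, by rw [hcE]; exact hg0⟩⟩
    (fun m B => ⟨B.1 ∪ pick m B, hunion m B⟩) m
  have hFsucc : ∀ m, (Fseq (m+1)).1 = (Fseq m).1 ∪ pick m (Fseq m) := fun m => rfl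
  have hmono : Monotone (fun m => (Fseq m).1) := by
    apply monotone_nat_of_le_succ
    intro m
    rw [hFsucc]
    exact Set.subset_union_left
  set Bstar : Set Ω := ⋃ m, (Fseq m).1 with hBstardef
  have hBstarm : MeasurableSet[F2] Bstar := MeasurableSet.iUnion (fun m => (Fseq m).2.1)
  have hBstarsub : Bstar ⊆ A := Set.iUnion_subset fun m => (Fseq m).2.2.1
  have hFsubstar : ∀ m, (Fseq m).1 ⊆ Bstar := fun m => Set.subset_iUnion (fun m => (Fseq m).1) m
  -- tendsto of residual measures
  have htend : Filter.Tendsto (fun m => (P (Bstar \ (Fseq m).1)).toReal) Filter.atTop (nhds 0) := by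
    have h1 : Filter.Tendsto (fun m => P (Bstar \ (Fseq m).1)) Filter.atTop
        (nhds (P (⋂ m, Bstar \ (Fseq m).1))) := by
      refine tendsto_measure_iInter_atTop
        (fun m => (hBstarm.diff (Fseq m).2.1).nullMeasurableSet)
        (fun i j hij => Set.diff_subset_diff (subset_refl _) (hmono hij))
        ⟨0, measure_ne_top P _⟩
    have h2 : (⋂ m, Bstar \ (Fseq m).1) = ∅ := by
      ext ω
      simp only [Set.mem_iInter, Set.mem_diff, Set.mem_empty_iff_false, iff_false, not_forall]
      by_cases hω : ω ∈ Bstar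
      · obtain ⟨m, hm⟩ := Set.mem_iUnion.mp hω
        exact ⟨m, fun hc => hc.2 hm⟩
      · exact ⟨0, fun hc => hω hc.1⟩
    rw [h2, measure_empty] at h1
    have := (ENNReal.tendsto_toReal (a := 0) (by simp)).comp h1
    simpa [Function.comp_def] using this
  -- Step I : cexpInd Bstar ≤ g a.e.
  have hkey : ∀ k : ℕ, P {ω | g ω + 1/((k:ℝ)+1) < cexpInd F1 F2 P Bstar ω} = 0 := by
    intro k
    set Sk := {ω | g ω + 1/((k:ℝ)+1) < cexpInd F1 F2 P Bstar ω} with hSkdef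
    have hSkm : MeasurableSet[F2] Sk :=
      hle _ (measurableSet_lt (hgmeas.add_const _) (cexpInd_meas1 P Bstar))
    have hup : ∀ m, ∫ ω in Sk, cexpInd F1 F2 P Bstar ω ∂P ≤
        (∫ ω in Sk, g ω ∂P) + (P (Bstar \ (Fseq m).1)).toReal := by
      intro m
      have hdm := cexpInd_diff (F1 := F1) P hBstarm (Fseq m).2.1 (hFsubstar m)
      have h1 : ∫ ω in Sk, cexpInd F1 F2 P Bstar ω ∂P ≤
          ∫ ω in Sk, (cexpInd F1 F2 P (Fseq m).1 ω
            + cexpInd F1 F2 P (Bstar \ (Fseq m).1) ω) ∂P := by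
        refine setIntegral_mono_ae integrable_condExp.integrableOn
          ((integrable_condExp.add integrable_condExp).integrableOn) ?_
        filter_upwards [hdm] with ω hω
        rw [hω]
        linarith
      have hadd : ∫ ω in Sk, (cexpInd F1 F2 P ((Fseq m).1) ω
            + cexpInd F1 F2 P (Bstar \ (Fseq m).1) ω) ∂P =
          (∫ ω in Sk, cexpInd F1 F2 P ((Fseq m).1) ω ∂P)
            + ∫ ω in Sk, cexpInd F1 F2 P (Bstar \ (Fseq m).1) ω ∂P :=
        integral_add integrable_condExp.integrableOn integrable_condExp.integrableOn
      rw [hadd] at h1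
      have h2 : ∫ ω in Sk, cexpInd F1 F2 P (Fseq m).1 ω ∂P ≤ ∫ ω in Sk, g ω ∂P :=
        setIntegral_mono_ae integrable_condExp.integrableOn hgint.integrableOn (Fseq m).2.2.2
      have h3 : ∫ ω in Sk, cexpInd F1 F2 P (Bstar \ (Fseq m).1) ω ∂P ≤
          ∫ ω, cexpInd F1 F2 P (Bstar \ (Fseq m).1) ω ∂P :=
        setIntegral_le_integral integrable_condExp (cexpInd_nonneg (F1 := F1) (P := P) _)
      rw [integral_cexpInd (F1 := F1) P hle (hBstarm.diff (Fseq m).2.1)] at h3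
      linarith
    have hlim : ∫ ω in Sk, cexpInd F1 F2 P Bstar ω ∂P ≤ ∫ ω in Sk, g ω ∂P := by
      have htend' : Filter.Tendsto
          (fun m => (∫ ω in Sk, g ω ∂P) + (P (Bstar \ (Fseq m).1)).toReal)
          Filter.atTop (nhds ((∫ ω in Sk, g ω ∂P) + 0)) := tendsto_const_nhds.add htend
      rw [add_zero] at htend'
      exact ge_of_tendsto htend' (Filter.Eventually.of_forall hup)
    have hlow : (∫ ω in Sk, g ω ∂P) + (1/((k:ℝ)+1)) * (P Sk).toReal ≤
        ∫ ω in Sk, cexpInd F1 F2 P Bstar ω ∂P := by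
      have hmono' : ∫ ω in Sk, (g ω + 1/((k:ℝ)+1)) ∂P ≤
          ∫ ω in Sk, cexpInd F1 F2 P Bstar ω ∂P := by
        refine setIntegral_mono_on (hgint.add (integrable_const _)).integrableOn
          integrable_condExp.integrableOn hSkm ?_
        intro ω hω
        exact le_of_lt hω
      rw [integral_add hgint.integrableOn (integrable_const _).integrableOn,
        setIntegral_const] at hmono'
      simp only [smul_eq_mul, Measure.real] at hmono'
      linarith [hmono']
    have hpos : (0:ℝ) < 1/((k:ℝ)+1) := by positivity
    have htr : (P Sk).toReal = 0 := by
      nlinarith [ENNReal.toReal_nonneg (a := P Sk)]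
    rcases (ENNReal.toReal_eq_zero_iff _).mp htr with h | h
    · exact h
    · exact absurd h (measure_ne_top P _)
  have hle_g : cexpInd F1 F2 P Bstar ≤ᵐ[P] g := by
    rw [Filter.EventuallyLE, ae_iff]
    refine measure_mono_null ?_ (measure_iUnion_null_iff.mpr hkey)
    intro ω hω
    simp only [Set.mem_setOf_eq, not_le] at hω
    obtain ⟨k, hk⟩ := exists_nat_one_div_lt (sub_pos.mpr hω)
    refine Set.mem_iUnion.mpr ⟨k, ?_⟩
    simp only [Set.mem_setOf_eq]
    push_cast at hk ⊢
    linarith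
  -- Step II : g ≤ cexpInd Bstar a.e.
  have hge : g ≤ᵐ[P] cexpInd F1 F2 P Bstar := by
    by_contra hcon
    have hpos : P {ω | ¬ g ω ≤ cexpInd F1 F2 P Bstar ω} ≠ 0 := by
      intro h0
      exact hcon (by rw [Filter.EventuallyLE, ae_iff]; exact h0)
    have hsubU : {ω | ¬ g ω ≤ cexpInd F1 F2 P Bstar ω} ⊆
        ⋃ k : ℕ, {ω | cexpInd F1 F2 P Bstar ω + 1/((k:ℝ)+1) < g ω} := by
      intro ω hω
      simp only [Set.mem_setOf_eq, not_le] at hω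
      obtain ⟨k, hk⟩ := exists_nat_one_div_lt (sub_pos.mpr hω)
      refine Set.mem_iUnion.mpr ⟨k, ?_⟩
      simp only [Set.mem_setOf_eq]
      push_cast at hk ⊢
      linarith
    have hexk : ∃ k : ℕ, P {ω | cexpInd F1 F2 P Bstar ω + 1/((k:ℝ)+1) < g ω} ≠ 0 := by
      by_contra hall
      push_neg at hall
      exact hpos (measure_mono_null hsubU (measure_iUnion_null_iff.mpr hall))
    obtain ⟨k, hTk⟩ := hexk
    set Tk := {ω | cexpInd F1 F2 P Bstar ω + 1/((k:ℝ)+1) < g ω} with hTkdef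
    have hTkm1 : MeasurableSet[F1] Tk :=
      measurableSet_lt ((cexpInd_meas1 P Bstar).add_const _) hgmeas
    set A' : Set Ω := (A \ Bstar) ∩ Tk with hA'def
    have hA'm : MeasurableSet[F2] A' := (hA.diff hBstarm).inter (hle _ hTkm1)
    obtain ⟨B'', hB''m, hB''sub, hB''ae⟩ := shrink P hle hatomless hA'm (k+1)
    have hi := cexpInd_inter (F1 := F1) P (hA.diff hBstarm) hTkm1
    have hd := cexpInd_diff (F1 := F1) P hA hBstarm hBstarsub
    have hkeyA' : ∀ᵐ ω ∂P, (ω ∈ Tk → 1/((k:ℝ)+1) < cexpInd F1 F2 P A' ω) ∧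
        (ω ∉ Tk → cexpInd F1 F2 P A' ω = 0) := by
      filter_upwards [hi, hd, hg1] with ω hiω hdω hg1ω
      constructor
      · intro hmem
        rw [hiω, Set.indicator_of_mem hmem, hdω]
        have : cexpInd F1 F2 P Bstar ω + 1/((k:ℝ)+1) < g ω := hmem
        linarith
      · intro hmem
        rw [hiω, Set.indicator_of_notMem hmem]
    have hA'le1 := cexpInd_le_one (F1 := F1) P hle hA'm
    have hhalf : ((1:ℝ)/2)^(k+1) ≤ 1/((k:ℝ)+1) := by
      have h2 : ((k:ℝ)+1) ≤ 2^(k+1) := by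
        have := Nat.lt_two_pow_self (n := k+1)
        have h' : ((k+1 : ℕ) : ℝ) ≤ ((2^(k+1) : ℕ) : ℝ) := by exact_mod_cast this.le
        push_cast at h'
        linarith
      rw [div_pow, one_pow]
      exact one_div_le_one_div_of_le (by positivity) h2
    have hmono'' := cexpInd_mono (F1 := F1) P hA'm hB''m hB''sub
    have hmain : ∀ᵐ ω ∂P, (cexpInd F1 F2 P Bstar ω + cexpInd F1 F2 P B'' ω ≤ g ω) ∧
        (ω ∈ Tk → 0 < cexpInd F1 F2 P B'' ω) := by
      filter_upwards [hkeyA', hB''ae, hA'le1, hle_g, cexpInd_nonneg (F1 := F1) (P := P) B'',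
        hmono''] with ω hkω hB''ω hA'1 hleω hB''0 hm''
      by_cases hmem : ω ∈ Tk
      · have h1 : 1/((k:ℝ)+1) < cexpInd F1 F2 P A' ω := hkω.1 hmem
        have h2 : 0 < cexpInd F1 F2 P B'' ω := hB''ω.1 (lt_trans (by positivity) h1)
        have h3 : cexpInd F1 F2 P B'' ω ≤ ((1:ℝ)/2)^(k+1) * cexpInd F1 F2 P A' ω := hB''ω.2
        have h4 : ((1:ℝ)/2)^(k+1) * cexpInd F1 F2 P A' ω ≤ ((1:ℝ)/2)^(k+1) * 1 :=
          mul_le_mul_of_nonneg_left hA'1 (by positivity)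
        have h5 : cexpInd F1 F2 P Bstar ω + 1/((k:ℝ)+1) < g ω := hmem
        refine ⟨by nlinarith, fun _ => h2⟩
      · have h1 : cexpInd F1 F2 P A' ω = 0 := hkω.2 hmem
        have h2 : cexpInd F1 F2 P B'' ω ≤ 0 := h1 ▸ hm''
        exact ⟨by linarith, fun hc => absurd hc hmem⟩
    have hPB'' : 0 < (P B'').toReal := by
      rcases lt_or_eq_of_le (ENNReal.toReal_nonneg (a := P B'')) with h | h
      · exact h
      · exfalso
        have hPB0 : P B'' = 0 := by
          rcases (ENNReal.toReal_eq_zero_iff _).mp h.symm with h' | h'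
          · exact h'
          · exact absurd h' (measure_ne_top P _)
        have hint0 : ∫ ω, cexpInd F1 F2 P B'' ω ∂P = 0 := by
          rw [integral_cexpInd (F1 := F1) P hle hB''m, hPB0]
          simp
        have hae0 : cexpInd F1 F2 P B'' =ᵐ[P] 0 :=
          (integral_eq_zero_iff_of_nonneg_ae (cexpInd_nonneg (F1 := F1) (P := P) B'')
            integrable_condExp).mp hint0
        have : ∀ᵐ ω ∂P, ω ∉ Tk := by
          filter_upwards [hmain, hae0] with ω h1 h2
          intro hmem
          have := h1.2 hmem
          rw [h2] at this
          exact lt_irrefl _ this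
        exact hTk (measure_eq_zero_iff_ae_notMem.mpr this)
    -- B'' is a valid extension of every Fseq m
    have hQm : ∀ m, (P B'').toReal ∈ S ((Fseq m).1) := by
      intro m
      refine ⟨B'', ⟨hB''m, ?_, ?_⟩, rfl⟩
      · refine hB''sub.trans (Set.inter_subset_left.trans ?_)
        exact Set.diff_subset_diff_right (hFsubstar m)
      · have hmFm := cexpInd_mono (F1 := F1) P hBstarm (Fseq m).2.1 (hFsubstar m)
        filter_upwards [hmain, hmFm] with ω h1 h2
        linarith [h1.1]
    have hSge : ∀ m, (P B'').toReal ≤ sSup (S ((Fseq m).1)) :=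
      fun m => le_csSup (hSbdd _) (hQm m)
    set Dm : ℕ → Set Ω := fun m => pick m (Fseq m) with hDmdef
    have hDsub1 : ∀ m, Dm m ⊆ (Fseq (m+1)).1 := by
      intro m
      rw [hFsucc]
      exact Set.subset_union_right
    have hDsub2 : ∀ m, Dm m ⊆ A \ (Fseq m).1 := fun m => (hpickQ m (Fseq m)).2.1
    have hdisjD : Pairwise (Function.onFun Disjoint Dm) := by
      have haux : ∀ i j, i < j → Disjoint (Dm i) (Dm j) := by
        intro i j hij
        rw [Set.disjoint_left]
        intro x hxi hxj
        have hx1 : x ∈ (Fseq j).1 := hmono hij (hDsub1 i hxi)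
        exact (hDsub2 j hxj).2 hx1
      intro i j hij
      rcases lt_or_gt_of_ne hij with h | h
      · exact haux i j h
      · exact (haux j i h).symm
    have htsum : ∑' m, P (Dm m) ≠ ⊤ := by
      rw [← measure_iUnion hdisjD (fun m => (hpickQ m (Fseq m)).1)]
      exact measure_ne_top P _
    have htend0 : Filter.Tendsto (fun m => (P (Dm m)).toReal) Filter.atTop (nhds 0) := by
      have := (ENNReal.tendsto_toReal (a := 0) (by simp)).comp
        (ENNReal.tendsto_atTop_zero_of_tsum_ne_top htsum)
      simpa [Function.comp_def] using this
    have hpow0 : Filter.Tendsto (fun m : ℕ => ((1:ℝ)/2)^m) Filter.atTop (nhds 0) :=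
      tendsto_pow_atTop_nhds_zero_of_lt_one (by norm_num) (by norm_num)
    have hsum0 : Filter.Tendsto (fun m => (P (Dm m)).toReal + ((1:ℝ)/2)^m)
        Filter.atTop (nhds 0) := by
      have := htend0.add hpow0
      simpa using this
    obtain ⟨m, hm⟩ := (hsum0.eventually_lt_const hPB'').exists
    have h1 := hSge m
    have h2 := hpickS m (Fseq m)
    have h3 : sSup (S ((Fseq m).1)) - (1/2)^m ≤ (P (Dm m)).toReal := h2
    linarith
  exact ⟨Bstar, hBstarm, hBstarsub, hle_g.antisymm hge⟩

end exhaust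

theorem stmt1 {Ω : Type*} (F1 F2 : MeasurableSpace Ω) (hle : F1 ≤ F2)
    (P : @Measure Ω F2) (hP : @IsProbabilityMeasure Ω F2 P)
    (hatomless : CondAtomless F1 F2 P)
    (C : Set Ω) (hC : MeasurableSet[F2] C)
    (h : Ω → ℝ) (hmeas : Measurable[F1] h) (hrange : ∀ ω, h ω ∈ Set.Icc (0 : ℝ) 1) :
    ∃ B : Set Ω, MeasurableSet[F2] B ∧ B ⊆ C ∧
      cexpInd F1 F2 P B =ᵐ[P] fun ω => h ω * cexpInd F1 F2 P C ω := by
  haveI := hP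
  have hgmeas : Measurable[F1] (fun ω => h ω * cexpInd F1 F2 P C ω) :=
    hmeas.mul (cexpInd_meas1 P C)
  have hg0 : 0 ≤ᵐ[P] (fun ω => h ω * cexpInd F1 F2 P C ω) := by
    filter_upwards [cexpInd_nonneg (F1 := F1) (P := P) C] with ω hω
    exact mul_nonneg (hrange ω).1 hω
  have hg1 : (fun ω => h ω * cexpInd F1 F2 P C ω) ≤ᵐ[P] cexpInd F1 F2 P C := by
    filter_upwards [cexpInd_nonneg (F1 := F1) (P := P) C] with ω hω
    calc h ω * cexpInd F1 F2 P C ω ≤ 1 * cexpInd F1 F2 P C ω :=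
        mul_le_mul_of_nonneg_right (hrange ω).2 hω
      _ = cexpInd F1 F2 P C ω := one_mul _
  exact exhaust P hle hatomless hC hgmeas hg0 hg1
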